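/- (Inversed internalization for JLŁ.) For every justification term t and propositional formula β: if ⊢_JLŁ t:β, then β is a theorem of Łukasiewicz's proof system, i.e. ⊢_Ł β. The proof is by structural induction on t: if t is a constant c then β is an instance of a Łukasiewicz axiom scheme; if t = [s·u] then previously s:(α→β) and u:α were derived for some α; if t = [s+u] then previously s:β or u:β was derived; and t cannot be a variable since variable terms do not appear in proofs without premises. -/
import Mathlib


/-- Propositional formulas built from countably many atoms with ¬ and →. -/
inductive PropForm : Type
  | atom : ℕ → PropForm
  | neg  : PropForm → PropForm
  | imp  : PropForm → PropForm → PropForm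

/-- Łukasiewicz's Hilbert system: axioms L1, L2, L3 and modus ponens;
derivation from a set of premises `Γ`. -/
inductive LukDeriv : Set PropForm → PropForm → Prop
  | prem {Γ φ} : φ ∈ Γ → LukDeriv Γ φ
  | ax1 {Γ} (φ ψ : PropForm) : LukDeriv Γ (φ.imp (ψ.imp φ))
  | ax2 {Γ} (φ ψ χ : PropForm) :
      LukDeriv Γ ((φ.imp (ψ.imp χ)).imp ((φ.imp ψ).imp (φ.imp χ)))
  | ax3 {Γ} (φ ψ : PropForm) :
      LukDeriv Γ (((φ.neg).imp (ψ.neg)).imp (ψ.imp φ))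
  | mp {Γ φ ψ} : LukDeriv Γ (φ.imp ψ) → LukDeriv Γ φ → LukDeriv Γ ψ

/-- Justification terms: constants, variables, application and sum. -/
inductive JTerm : Type
  | const : ℕ → JTerm
  | var   : ℕ → JTerm
  | app   : JTerm → JTerm → JTerm
  | sum   : JTerm → JTerm → JTerm

/-- Justification formulas: propositional formulas extended with `t : φ`. -/
inductive JForm : Type
  | atom : ℕ → JForm
  | neg  : JForm → JForm
  | imp  : JForm → JForm → JForm
  | just : JTerm → JForm → JForm

/-- Embedding of propositional formulas into justification formulas. -/
def PropForm.toJ : PropForm → JForm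
  | .atom n  => .atom n
  | .neg φ   => .neg φ.toJ
  | .imp φ ψ => .imp φ.toJ ψ.toJ

/-- Schematic constant specification: a distinguished constant for each of the
three Łukasiewicz axiom schemes. -/
def c1 : JTerm := .const 1
def c2 : JTerm := .const 2
def c3 : JTerm := .const 3

/-- The system JLŁ: the Application and Sum axioms, justified Łukasiewicz axioms
(with schematic constant specification `c1, c2, c3`), modus ponens and
application introduction; derivation from a set of premises `Γ`. -/
inductive JLDeriv : Set JForm → JForm → Prop
  | prem {Γ φ} : φ ∈ Γ → JLDeriv Γ φ
  | appAx {Γ} (s t : JTerm) (φ ψ : JForm) :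
      JLDeriv Γ ((JForm.just s (φ.imp ψ)).imp
        ((JForm.just t φ).imp (JForm.just (s.app t) ψ)))
  | sumL {Γ} (s t : JTerm) (ψ : JForm) :
      JLDeriv Γ ((JForm.just s ψ).imp (JForm.just (s.sum t) ψ))
  | sumR {Γ} (s t : JTerm) (ψ : JForm) :
      JLDeriv Γ ((JForm.just t ψ).imp (JForm.just (s.sum t) ψ))
  | jax1 {Γ} (φ ψ : JForm) :
      JLDeriv Γ (JForm.just c1 (φ.imp (ψ.imp φ)))
  | jax2 {Γ} (φ ψ χ : JForm) :
      JLDeriv Γ (JForm.just c2 ((φ.imp (ψ.imp χ)).imp ((φ.imp ψ).imp (φ.imp χ))))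
  | jax3 {Γ} (φ ψ : JForm) :
      JLDeriv Γ (JForm.just c3 (((φ.neg).imp (ψ.neg)).imp (ψ.imp φ)))
  | mp {Γ φ ψ} : JLDeriv Γ (φ.imp ψ) → JLDeriv Γ φ → JLDeriv Γ ψ
  | appIntro {Γ} {s t : JTerm} {φ ψ : JForm} :
      JLDeriv Γ (JForm.just s (φ.imp ψ)) → JLDeriv Γ (JForm.just t φ) →
      JLDeriv Γ (JForm.just (s.app t) ψ)

/-- Forgetful translation: erase justifications, replacing them by a tautology. -/
def forget : JForm → PropForm
  | .atom n  => .atom n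
  | .neg φ   => .neg (forget φ)
  | .imp φ ψ => .imp (forget φ) (forget ψ)
  | .just _ _ => (PropForm.atom 0).imp ((PropForm.atom 0).imp (PropForm.atom 0))

lemma forget_toJ (β : PropForm) : forget β.toJ = β := by
  induction β with
  | atom n => rfl
  | neg φ ih => simp [PropForm.toJ, forget, ih]
  | imp φ ψ ih1 ih2 => simp [PropForm.toJ, forget, ih1, ih2]

/-- The invariant preserved by JLŁ-derivations from no premises. -/
def Good : JForm → Prop
  | .atom _ => True
  | .neg _ => True
  | .imp φ ψ => Good φ → Good ψ
  | .just _ φ => LukDeriv ∅ (forget φ)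

lemma good_of_deriv {φ : JForm} (h : JLDeriv ∅ φ) : Good φ := by
  induction h with
  | prem hm => exact absurd hm (Set.notMem_empty _)
  | appAx s t φ ψ =>
      intro h1 h2
      exact LukDeriv.mp h1 h2
  | sumL s t ψ => intro h1; exact h1
  | sumR s t ψ => intro h1; exact h1
  | jax1 φ ψ => exact LukDeriv.ax1 _ _
  | jax2 φ ψ χ => exact LukDeriv.ax2 _ _ _
  | jax3 φ ψ => exact LukDeriv.ax3 _ _
  | mp h1 h2 ih1 ih2 => exact ih1 ih2
  | appIntro h1 h2 ih1 ih2 => exact LukDeriv.mp ih1 ih2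

/-- Inversed internalization for JLŁ: if `⊢_JLŁ t:β` then `⊢_Ł β`. -/
theorem inversed_internalization (t : JTerm) (β : PropForm)
    (h : JLDeriv ∅ (JForm.just t β.toJ)) : LukDeriv ∅ β := by
  have := good_of_deriv h
  simpa [Good, forget_toJ] using this
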